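/- Let A be a nonempty Γ-invariant central hyperplane arrangement defined over L. For every γ ∈ Γ and q ∈ ℤ_{>0}, χ_{A,q}(γ) = Σ_{C ∈ C_T^γ} χ_{C,q}(γ), where C_T^γ := {C ∈ C_T : ρ_T(γ)(C) = C} and χ_{C,q}(γ) := #{t ∈ C ∩ T[q] : ρ_T(γ)(t) = t}. -/

import Mathlib

open Matrix

def intLattice (ℓ : ℕ) : AddSubgroup (Fin ℓ → ℝ) :=
  AddSubgroup.pi Set.univ fun _ => AddSubgroup.zmultiples (1 : ℝ)

abbrev Torus (ℓ : ℕ) := (Fin ℓ → ℝ) ⧸ intLattice ℓ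

abbrev pT (ℓ : ℕ) : (Fin ℓ → ℝ) →+ Torus ℓ := QuotientAddGroup.mk' (intLattice ℓ)

section Aux

variable {ℓ n : ℕ}

lemma mem_intLattice_iff {x : Fin ℓ → ℝ} :
    x ∈ intLattice ℓ ↔ ∃ m : Fin ℓ → ℤ, ∀ j, x j = (m j : ℝ) := by
  constructor
  · intro hx
    have h : ∀ j, ∃ m : ℤ, x j = (m : ℝ) := by
      intro j
      have := hx j (Set.mem_univ j)
      rcases AddSubgroup.mem_zmultiples_iff.mp this with ⟨k, hk⟩
      exact ⟨k, by rw [← hk]; simp⟩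
    choose m hm using h
    exact ⟨m, hm⟩
  · rintro ⟨m, hm⟩
    intro j _
    exact AddSubgroup.mem_zmultiples_iff.mpr ⟨m j, by simp [hm j]⟩

lemma intCast_mem_intLattice (m : Fin ℓ → ℤ) : (fun j => (m j : ℝ)) ∈ intLattice ℓ :=
  mem_intLattice_iff.mpr ⟨m, fun _ => rfl⟩

lemma intCast_vecMul (M : Matrix (Fin ℓ) (Fin ℓ) ℤ) (m : Fin ℓ → ℤ) :
    (fun j => (m j : ℝ)) ᵥ* (M.map (Int.cast : ℤ → ℝ)) = fun i => (((m ᵥ* M) i : ℤ) : ℝ) := by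
  funext i
  simp [Matrix.vecMul, dotProduct]

/-- The map on the torus induced by an integer matrix (acting by `x ↦ x ᵥ* M`). -/
noncomputable def tmap (M : Matrix (Fin ℓ) (Fin ℓ) ℤ) : Torus ℓ →+ Torus ℓ :=
  QuotientAddGroup.map _ _ ((M.map (Int.cast : ℤ → ℝ)).vecMulLinear.toAddMonoidHom) (by
    intro x hx
    rcases mem_intLattice_iff.mp hx with ⟨m, hm⟩
    have hx' : x = fun j => (m j : ℝ) := funext hm
    subst hx'
    show (fun j => (m j : ℝ)) ᵥ* (M.map (Int.cast : ℤ → ℝ)) ∈ intLattice ℓ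
    rw [intCast_vecMul]
    exact intCast_mem_intLattice _)

lemma tmap_mk (M : Matrix (Fin ℓ) (Fin ℓ) ℤ) (x : Fin ℓ → ℝ) :
    tmap M (pT ℓ x) = pT ℓ (x ᵥ* (M.map (Int.cast : ℤ → ℝ))) := rfl

lemma tmap_tmap (M N : Matrix (Fin ℓ) (Fin ℓ) ℤ) (t : Torus ℓ) :
    tmap N (tmap M t) = tmap (M * N) t := by
  obtain ⟨x, rfl⟩ := QuotientAddGroup.mk'_surjective (intLattice ℓ) t
  have hmn : (M * N).map (Int.cast : ℤ → ℝ) =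
      M.map (Int.cast : ℤ → ℝ) * N.map (Int.cast : ℤ → ℝ) := by
    ext i j
    simp [Matrix.mul_apply]
  rw [tmap_mk, tmap_mk, tmap_mk, vecMul_vecMul, hmn]

lemma tmap_one (t : Torus ℓ) : tmap (1 : Matrix (Fin ℓ) (Fin ℓ) ℤ) t = t := by
  obtain ⟨x, rfl⟩ := QuotientAddGroup.mk'_surjective (intLattice ℓ) t
  rw [tmap_mk]
  congr 1
  rw [Matrix.map_one _ (by simp) (by simp), vecMul_one]

lemma tmap_continuous (M : Matrix (Fin ℓ) (Fin ℓ) ℤ) : Continuous (tmap M) := by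
  refine (QuotientAddGroup.isQuotientMap_mk (intLattice ℓ)).continuous_iff.mpr ?_
  show Continuous fun x : Fin ℓ → ℝ => pT ℓ (x ᵥ* (M.map (Int.cast : ℤ → ℝ)))
  exact QuotientAddGroup.continuous_mk.comp
    (LinearMap.continuous_on_pi (M.map (Int.cast : ℤ → ℝ)).vecMulLinear)

end Aux
def Maff {ℓ n : ℕ} (α : Fin n → Fin ℓ → ℤ) : Set (Fin ℓ → ℝ) :=
  {x | ∀ (i : Fin n) (k : ℤ), x ⬝ᵥ (fun j => ((α i j : ℤ) : ℝ)) ≠ (k : ℝ)}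

def TA {ℓ n : ℕ} (α : Fin n → Fin ℓ → ℤ) : Set (Torus ℓ) := pT ℓ '' Maff α

def IsChamberT {ℓ n : ℕ} (α : Fin n → Fin ℓ → ℤ) (C : Set (Torus ℓ)) : Prop :=
  ∃ t ∈ TA α, C = connectedComponentIn (TA α) t

def tAct {ℓ : ℕ} (R : Matrix (Fin ℓ) (Fin ℓ) ℝ) (C : Set (Torus ℓ)) : Set (Torus ℓ) :=
  pT ℓ '' ((fun x => x ᵥ* R) '' (pT ℓ ⁻¹' C))

section Aux2

variable {ℓ n : ℕ} {α : Fin n → Fin ℓ → ℤ}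

lemma intCast_dotProduct (m c : Fin ℓ → ℤ) :
    (fun j => (m j : ℝ)) ⬝ᵥ (fun j => (c j : ℝ)) = ((m ⬝ᵥ c : ℤ) : ℝ) := by
  simp [dotProduct]

lemma maff_of_pT_eq {x y : Fin ℓ → ℝ} (h : pT ℓ x = pT ℓ y) (hx : x ∈ Maff α) :
    y ∈ Maff α := by
  have h' : x - y ∈ intLattice ℓ := (QuotientAddGroup.eq_iff_sub_mem).mp h
  rcases mem_intLattice_iff.mp h' with ⟨m, hm⟩
  intro i k hk
  have hy : y = fun j => x j - (m j : ℝ) := by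
    funext j
    have := hm j
    simp only [Pi.sub_apply] at this
    linarith
  apply hx i (k + m ⬝ᵥ α i)
  have hxa : x ⬝ᵥ (fun j => ((α i j : ℤ) : ℝ)) =
      y ⬝ᵥ (fun j => ((α i j : ℤ) : ℝ)) + (fun j => (m j : ℝ)) ⬝ᵥ (fun j => ((α i j : ℤ) : ℝ)) := by
    rw [hy]
    simp [dotProduct, Finset.sum_add_distrib, sub_mul]
  rw [hxa, hk, intCast_dotProduct]
  push_cast
  ring

lemma mem_TA_iff {y : Fin ℓ → ℝ} : pT ℓ y ∈ TA α ↔ y ∈ Maff α := by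
  constructor
  · rintro ⟨x, hx, hxy⟩
    exact maff_of_pT_eq hxy hx
  · intro hy
    exact Set.mem_image_of_mem _ hy

lemma maff_vecMul (M : Matrix (Fin ℓ) (Fin ℓ) ℤ)
    (hM : ∀ i, ∃ j, M *ᵥ α i = α j ∨ M *ᵥ α i = -α j)
    {y : Fin ℓ → ℝ} (hy : y ∈ Maff α) :
    (y ᵥ* M.map (Int.cast : ℤ → ℝ)) ∈ Maff α := by
  intro i k hk
  obtain ⟨j, hj⟩ := hM i
  have h1 : (y ᵥ* M.map (Int.cast : ℤ → ℝ)) ⬝ᵥ (fun j' => ((α i j' : ℤ) : ℝ)) =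
      y ⬝ᵥ (M.map (Int.cast : ℤ → ℝ) *ᵥ fun j' => ((α i j' : ℤ) : ℝ)) :=
    (dotProduct_mulVec _ _ _).symm
  have h2 : (M.map (Int.cast : ℤ → ℝ) *ᵥ fun j' => ((α i j' : ℤ) : ℝ)) =
      fun r => (((M *ᵥ α i) r : ℤ) : ℝ) := by
    funext r
    simp [Matrix.mulVec, dotProduct]
  rw [h1, h2] at hk
  rcases hj with hj | hj
  · rw [hj] at hk
    exact hy j k hk
  · rw [hj] at hk
    apply hy j (-k)
    have : y ⬝ᵥ (fun r => (((-α j) r : ℤ) : ℝ)) = -(y ⬝ᵥ fun r => ((α j r : ℤ) : ℝ)) := by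
      simp [dotProduct, Finset.sum_neg_distrib]
    rw [this] at hk
    push_cast
    linarith
end Aux2
section Aux3

variable {ℓ n : ℕ} {α : Fin n → Fin ℓ → ℤ}

lemma tAct_eq_image (M : Matrix (Fin ℓ) (Fin ℓ) ℤ) (C : Set (Torus ℓ)) :
    tAct (M.map (Int.cast : ℤ → ℝ)) C = tmap M '' C := by
  unfold tAct
  rw [Set.image_image]
  have h1 : (fun x => pT ℓ (x ᵥ* M.map (Int.cast : ℤ → ℝ))) = fun x => tmap M (pT ℓ x) := by
    funext x; rw [tmap_mk]
  rw [h1, ← Set.image_image (tmap M) (pT ℓ),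
    Set.image_preimage_eq C (QuotientAddGroup.mk'_surjective _)]

lemma fix_iff (M : Matrix (Fin ℓ) (Fin ℓ) ℤ) (t : Torus ℓ) :
    (∃ x : Fin ℓ → ℝ, t = pT ℓ x ∧ pT ℓ (x ᵥ* M.map (Int.cast : ℤ → ℝ)) = t) ↔
      tmap M t = t := by
  constructor
  · rintro ⟨x, rfl, hx⟩
    rw [tmap_mk]; exact hx
  · intro h
    obtain ⟨x, rfl⟩ := QuotientAddGroup.mk'_surjective (intLattice ℓ) t
    exact ⟨x, rfl, by rw [← tmap_mk, h]⟩

lemma tmap_maps_TA (M : Matrix (Fin ℓ) (Fin ℓ) ℤ)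
    (hM : ∀ i, ∃ j, M *ᵥ α i = α j ∨ M *ᵥ α i = -α j) :
    tmap M '' TA α ⊆ TA α := by
  rintro _ ⟨t, ht, rfl⟩
  obtain ⟨y, hy, rfl⟩ := ht
  rw [tmap_mk]
  exact mem_TA_iff.mpr (maff_vecMul M hM hy)

/-- If `t ∈ TA α` is fixed by `tmap M` and `M` has an inverse `N` (both preserving the
arrangement), then the chamber of `t` is fixed setwise. -/
lemma chamber_fixed (M N : Matrix (Fin ℓ) (Fin ℓ) ℤ)
    (hMN : M * N = 1) (hNM : N * M = 1)
    (hM : ∀ i, ∃ j, M *ᵥ α i = α j ∨ M *ᵥ α i = -α j)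
    (hN : ∀ i, ∃ j, N *ᵥ α i = α j ∨ N *ᵥ α i = -α j)
    {t : Torus ℓ} (ht : t ∈ TA α) (hfix : tmap M t = t) :
    tmap M '' connectedComponentIn (TA α) t = connectedComponentIn (TA α) t := by
  set A := connectedComponentIn (TA α) t with hA
  have htA : t ∈ A := mem_connectedComponentIn ht
  have hNfix : tmap N t = t := by
    conv_lhs => rw [← hfix]
    rw [tmap_tmap, hMN, tmap_one]
  have himg : ∀ (P : Matrix (Fin ℓ) (Fin ℓ) ℤ),
      (∀ i, ∃ j, P *ᵥ α i = α j ∨ P *ᵥ α i = -α j) → tmap P t = t →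
      tmap P '' A ⊆ A := by
    intro P hP hPfix
    have hconn : IsPreconnected (tmap P '' A) :=
      isPreconnected_connectedComponentIn.image _ ((tmap_continuous P).continuousOn)
    have hsub : tmap P '' A ⊆ TA α :=
      Set.Subset.trans (Set.image_mono (connectedComponentIn_subset _ _)) (tmap_maps_TA P hP)
    have hmem : t ∈ tmap P '' A := ⟨t, htA, hPfix⟩
    exact hconn.subset_connectedComponentIn hmem hsub
  refine Set.Subset.antisymm (himg M hM hfix) ?_
  intro u hu
  have h1 : tmap N u ∈ A := himg N hN hNfix (Set.mem_image_of_mem _ hu)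
  exact ⟨tmap N u, h1, by rw [tmap_tmap, hNM, tmap_one]⟩

end Aux3
section Aux4

variable {ℓ n : ℕ} {α : Fin n → Fin ℓ → ℤ}

/-- Division by `q` of an integer vector. -/
noncomputable def ql (q : ℕ) (m : Fin ℓ → ℤ) : Fin ℓ → ℝ := fun j => (m j : ℝ) / q

lemma ql_mem_iff {q : ℕ} (hq : 0 < q) (m : Fin ℓ → ℤ) :
    ql q m ∈ intLattice ℓ ↔ ∀ j, ((m j : ZMod q)) = 0 := by
  have hq' : (q : ℝ) ≠ 0 := Nat.cast_ne_zero.mpr hq.ne'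
  rw [mem_intLattice_iff]
  constructor
  · rintro ⟨c, hc⟩ j
    rw [ZMod.intCast_zmod_eq_zero_iff_dvd]
    have h1 := hc j
    rw [ql, div_eq_iff hq'] at h1
    have h2 : m j = c j * (q : ℤ) := by exact_mod_cast h1
    exact ⟨c j, by linarith⟩
  · intro h
    have h' : ∀ j, ∃ c : ℤ, m j = (q : ℤ) * c := by
      intro j
      exact (ZMod.intCast_zmod_eq_zero_iff_dvd _ _).mp (h j)
    choose c hc using h'
    refine ⟨c, fun j => ?_⟩
    rw [ql, div_eq_iff hq', hc j]
    push_cast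
    ring

lemma ql_dot {q : ℕ} (m c : Fin ℓ → ℤ) :
    ql q m ⬝ᵥ (fun j => ((c j : ℤ) : ℝ)) = ((m ⬝ᵥ c : ℤ) : ℝ) / q := by
  simp only [ql, dotProduct, div_mul_eq_mul_div, ← Finset.sum_div]
  push_cast
  rfl

lemma ql_maff_iff {q : ℕ} (hq : 0 < q) (m : Fin ℓ → ℤ) :
    ql q m ∈ Maff α ↔ ∀ i, ((m ⬝ᵥ α i : ℤ) : ZMod q) ≠ 0 := by
  have hq' : (q : ℝ) ≠ 0 := Nat.cast_ne_zero.mpr hq.ne'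
  constructor
  · intro h i hi
    rw [ZMod.intCast_zmod_eq_zero_iff_dvd] at hi
    obtain ⟨k, hk⟩ := hi
    apply h i k
    rw [ql_dot, hk, div_eq_iff hq']
    push_cast
    ring
  · intro h i k hk
    apply h i
    rw [ql_dot, div_eq_iff hq'] at hk
    rw [ZMod.intCast_zmod_eq_zero_iff_dvd]
    have h2 : m ⬝ᵥ α i = k * (q : ℤ) := by exact_mod_cast hk
    exact ⟨k, by linarith⟩

lemma ql_vecMul {q : ℕ} (m : Fin ℓ → ℤ) (M : Matrix (Fin ℓ) (Fin ℓ) ℤ) :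
    ql q m ᵥ* M.map (Int.cast : ℤ → ℝ) = ql q (m ᵥ* M) := by
  funext i
  simp only [ql, vecMul, dotProduct, Matrix.map_apply, div_mul_eq_mul_div, ← Finset.sum_div]
  push_cast
  rfl

lemma pT_ql_eq_iff {q : ℕ} (hq : 0 < q) (a b : Fin ℓ → ℤ) :
    pT ℓ (ql q a) = pT ℓ (ql q b) ↔ ∀ j, ((a j : ZMod q)) = ((b j : ZMod q)) := by
  rw [QuotientAddGroup.mk'_apply, QuotientAddGroup.mk'_apply, QuotientAddGroup.eq_iff_sub_mem]
  have hsub : ql q a - ql q b = ql q (a - b) := by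
    funext j
    simp [ql, sub_div]
  rw [hsub, ql_mem_iff hq]
  constructor
  · intro h j
    have := h j
    rw [Pi.sub_apply] at this
    push_cast at this
    linear_combination (norm := ring_nf) this
  · intro h j
    rw [Pi.sub_apply]
    push_cast
    rw [h j]
    ring

lemma q_smul_ql {q : ℕ} (hq : 0 < q) (m : Fin ℓ → ℤ) :
    q • pT ℓ (ql q m) = 0 := by
  have hq' : (q : ℝ) ≠ 0 := Nat.cast_ne_zero.mpr hq.ne'
  rw [← map_nsmul]
  rw [QuotientAddGroup.mk'_apply, QuotientAddGroup.eq_zero_iff]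
  have : q • ql q m = fun j => ((m j : ℤ) : ℝ) := by
    funext j
    simp only [Pi.smul_apply, ql, nsmul_eq_mul]
    field_simp
  rw [this]
  exact intCast_mem_intLattice m

end Aux4
def realMat {ℓ : ℕ} {Γ : Type*} [Group Γ]
    (ρ : Γ →* Matrix.GeneralLinearGroup (Fin ℓ) ℤ) (γ : Γ) : Matrix (Fin ℓ) (Fin ℓ) ℝ :=
  ((ρ γ : Matrix (Fin ℓ) (Fin ℓ) ℤ)).map (Int.cast : ℤ → ℝ)

theorem stmt_12 {ℓ n : ℕ} (hn : 0 < n) {Γ : Type*} [Group Γ] [Fintype Γ]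
    (ρ : Γ →* Matrix.GeneralLinearGroup (Fin ℓ) ℤ)
    (hρ : Function.Injective ρ)
    (α : Fin n → Fin ℓ → ℤ)
    (hinv : ∀ (γ : Γ) (i : Fin n), ∃ j : Fin n,
      ((↑(ρ γ)⁻¹ : Matrix (Fin ℓ) (Fin ℓ) ℤ) *ᵥ α i = α j) ∨
      ((↑(ρ γ)⁻¹ : Matrix (Fin ℓ) (Fin ℓ) ℤ) *ᵥ α i = -α j))
    (q : ℕ) (hq : 0 < q) (γ : Γ) :
    Nat.card {x : Fin ℓ → ZMod q //
        (∀ i : Fin n, x ⬝ᵥ (fun j => ((α i j : ℤ) : ZMod q)) ≠ 0) ∧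
        x ᵥ* (((ρ γ : Matrix (Fin ℓ) (Fin ℓ) ℤ)).map (Int.cast : ℤ → ZMod q)) = x} =
      ∑ᶠ C ∈ {C : Set (Torus ℓ) | IsChamberT α C ∧ tAct (realMat ρ γ) C = C},
        Nat.card {t : Torus ℓ // t ∈ C ∧ q • t = 0 ∧
          ∃ x : Fin ℓ → ℝ, t = pT ℓ x ∧ pT ℓ (x ᵥ* realMat ρ γ) = t} := by
  classical
  haveI : NeZero q := ⟨hq.ne'⟩
  have hq' : (q : ℝ) ≠ 0 := Nat.cast_ne_zero.mpr hq.ne'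
  set Mγ : Matrix (Fin ℓ) (Fin ℓ) ℤ := (ρ γ : Matrix (Fin ℓ) (Fin ℓ) ℤ) with hMγ
  set Nγ : Matrix (Fin ℓ) (Fin ℓ) ℤ := (ρ γ⁻¹ : Matrix (Fin ℓ) (Fin ℓ) ℤ) with hNγ
  have hreal : realMat ρ γ = Mγ.map (Int.cast : ℤ → ℝ) := rfl
  have hMN : Mγ * Nγ = 1 := by
    have h : (ρ γ) * (ρ γ⁻¹) = 1 := by rw [← _root_.map_mul, mul_inv_cancel, _root_.map_one]
    calc Mγ * Nγ = ((ρ γ * ρ γ⁻¹ : Matrix.GeneralLinearGroup (Fin ℓ) ℤ) :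
          Matrix (Fin ℓ) (Fin ℓ) ℤ) := (Units.val_mul _ _).symm
      _ = 1 := by rw [h]; rfl
  have hNM : Nγ * Mγ = 1 := by
    have h : (ρ γ⁻¹) * (ρ γ) = 1 := by rw [← _root_.map_mul, inv_mul_cancel, _root_.map_one]
    calc Nγ * Mγ = ((ρ γ⁻¹ * ρ γ : Matrix.GeneralLinearGroup (Fin ℓ) ℤ) :
          Matrix (Fin ℓ) (Fin ℓ) ℤ) := (Units.val_mul _ _).symm
      _ = 1 := by rw [h]; rfl
  have hM : ∀ i, ∃ j, Mγ *ᵥ α i = α j ∨ Mγ *ᵥ α i = -α j := by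
    intro i
    have h := hinv γ⁻¹ i
    rwa [map_inv, inv_inv] at h
  have hN : ∀ i, ∃ j, Nγ *ᵥ α i = α j ∨ Nγ *ᵥ α i = -α j := by
    intro i
    have h := hinv γ i
    rwa [← map_inv] at h
  -- the set of fixed `q`-torsion points of `T(A)`
  set S : Set (Torus ℓ) := {t | t ∈ TA α ∧ q • t = 0 ∧ tmap Mγ t = t} with hS_def
  set vl : (Fin ℓ → ZMod q) → (Fin ℓ → ℤ) := fun x j => ((x j).val : ℤ) with hvl_def
  have hvl : ∀ (x : Fin ℓ → ZMod q) (j : Fin ℓ), ((vl x j : ℤ) : ZMod q) = x j := by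
    intro x j
    simp [hvl_def, ZMod.natCast_val, ZMod.cast_id]
  set g : (Fin ℓ → ZMod q) → Torus ℓ := fun x => pT ℓ (ql q (vl x)) with hg_def
  have hdot : ∀ (x : Fin ℓ → ZMod q) (i : Fin n),
      ((vl x ⬝ᵥ α i : ℤ) : ZMod q) = x ⬝ᵥ (fun j => ((α i j : ℤ) : ZMod q)) := by
    intro x i
    simp [dotProduct, Int.cast_sum, Int.cast_mul, hvl]
  have hvm : ∀ (x : Fin ℓ → ZMod q) (j : Fin ℓ),
      (((vl x ᵥ* Mγ) j : ℤ) : ZMod q) = (x ᵥ* Mγ.map (Int.cast : ℤ → ZMod q)) j := by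
    intro x j
    have h := RingHom.map_vecMul (Int.castRingHom (ZMod q)) Mγ (vl x) j
    simp only [Int.coe_castRingHom] at h
    rw [h]
    congr 1
    funext j'
    exact hvl x j'
  have hgS : ∀ x : Fin ℓ → ZMod q, g x ∈ S ↔
      ((∀ i : Fin n, x ⬝ᵥ (fun j => ((α i j : ℤ) : ZMod q)) ≠ 0) ∧
        x ᵥ* (Mγ.map (Int.cast : ℤ → ZMod q)) = x) := by
    intro x
    have h1 : g x ∈ TA α ↔ ∀ i : Fin n, x ⬝ᵥ (fun j => ((α i j : ℤ) : ZMod q)) ≠ 0 := by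
      rw [hg_def, mem_TA_iff, ql_maff_iff hq]
      constructor
      · intro h i; rw [← hdot]; exact h i
      · intro h i; rw [hdot]; exact h i
    have h2 : q • g x = 0 := q_smul_ql hq _
    have h3 : tmap Mγ (g x) = g x ↔ x ᵥ* (Mγ.map (Int.cast : ℤ → ZMod q)) = x := by
      rw [hg_def, tmap_mk, ql_vecMul, pT_ql_eq_iff hq]
      constructor
      · intro h
        funext j
        rw [← hvm, h j, hvl]
      · intro h j
        rw [hvm, h, hvl]
    constructor
    · rintro ⟨hta, _, hfix⟩
      exact ⟨h1.mp hta, h3.mp hfix⟩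
    · rintro ⟨hα, hfix⟩
      exact ⟨h1.mpr hα, h2, h3.mpr hfix⟩
  have hg_inj : Function.Injective g := by
    intro x y h
    rw [hg_def] at h
    simp only at h
    rw [pT_ql_eq_iff hq] at h
    funext j
    rw [← hvl x j, ← hvl y j, h j]
  have hS_sub : S ⊆ Set.range g := by
    rintro t ⟨_, hq0, _⟩
    obtain ⟨y, rfl⟩ := QuotientAddGroup.mk'_surjective (intLattice ℓ) t
    rw [← map_nsmul, QuotientAddGroup.mk'_apply, QuotientAddGroup.eq_zero_iff] at hq0
    rcases mem_intLattice_iff.mp hq0 with ⟨m, hm⟩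
    have hy : y = ql q m := by
      funext j
      have := hm j
      simp only [Pi.smul_apply, nsmul_eq_mul] at this
      rw [ql, eq_div_iff hq']
      linarith
    refine ⟨fun j => ((m j : ℤ) : ZMod q), ?_⟩
    rw [hg_def]
    simp only
    rw [hy, pT_ql_eq_iff hq]
    intro j
    simpa using hvl (fun j => ((m j : ℤ) : ZMod q)) j
  have hS_fin : S.Finite := (Set.finite_range g).subset hS_sub
  -- LHS equals `Nat.card S`
  have hLHS : Nat.card {x : Fin ℓ → ZMod q //
      (∀ i : Fin n, x ⬝ᵥ (fun j => ((α i j : ℤ) : ZMod q)) ≠ 0) ∧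
      x ᵥ* (Mγ.map (Int.cast : ℤ → ZMod q)) = x} = Nat.card S := by
    apply Nat.card_congr
    refine Equiv.ofBijective (fun x => ⟨g x.1, (hgS x.1).mpr x.2⟩) ⟨?_, ?_⟩
    · intro x y h
      exact Subtype.ext (hg_inj (congrArg Subtype.val h))
    · rintro ⟨t, ht⟩
      obtain ⟨x, hx⟩ := hS_sub ht
      exact ⟨⟨x, (hgS x).mp (hx ▸ ht)⟩, Subtype.ext hx⟩
  rw [hLHS]
  -- per-chamber identification
  have hiff : ∀ C : Set (Torus ℓ), IsChamberT α C → ∀ t : Torus ℓ,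
      (t ∈ C ∧ q • t = 0 ∧ ∃ x : Fin ℓ → ℝ, t = pT ℓ x ∧ pT ℓ (x ᵥ* realMat ρ γ) = t) ↔
      t ∈ C ∩ S := by
    rintro C ⟨t₀, ht₀, rfl⟩ t
    constructor
    · rintro ⟨htC, hq0, hex⟩
      have hta : t ∈ TA α := connectedComponentIn_subset _ _ htC
      exact ⟨htC, hta, hq0, (fix_iff Mγ t).mp (hreal ▸ hex)⟩
    · rintro ⟨htC, _, hq0, hfix⟩
      exact ⟨htC, hq0, hreal ▸ (fix_iff Mγ t).mpr hfix⟩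
  have hcard : ∀ C : Set (Torus ℓ), IsChamberT α C →
      Nat.card {t : Torus ℓ // t ∈ C ∧ q • t = 0 ∧
        ∃ x : Fin ℓ → ℝ, t = pT ℓ x ∧ pT ℓ (x ᵥ* realMat ρ γ) = t} = (C ∩ S).ncard := by
    intro C hC
    rw [← Nat.card_coe_set_eq]
    exact Nat.card_congr (Equiv.subtypeEquivRight (hiff C hC))
  set SF : Finset (Torus ℓ) := hS_fin.toFinset with hSF_def
  set T : Finset (Set (Torus ℓ)) := SF.image (fun t => connectedComponentIn (TA α) t) with hT_def
  -- membership facts for `T`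
  have hmemS : ∀ t ∈ SF, t ∈ S := fun t ht => hS_fin.mem_toFinset.mp ht
  have hTfc : ∀ C ∈ T, IsChamberT α C ∧ tAct (realMat ρ γ) C = C := by
    intro C hC
    rw [hT_def, Finset.mem_image] at hC
    obtain ⟨t, htSF, rfl⟩ := hC
    obtain ⟨hta, hq0, hfix⟩ := hmemS t htSF
    refine ⟨⟨t, hta, rfl⟩, ?_⟩
    rw [hreal, tAct_eq_image]
    exact chamber_fixed Mγ Nγ hMN hNM hM hN hta hfix
  -- support identification
  have hsupp : {C : Set (Torus ℓ) | IsChamberT α C ∧ tAct (realMat ρ γ) C = C} ∩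
      Function.support (fun C => Nat.card {t : Torus ℓ // t ∈ C ∧ q • t = 0 ∧
        ∃ x : Fin ℓ → ℝ, t = pT ℓ x ∧ pT ℓ (x ᵥ* realMat ρ γ) = t}) = ↑T := by
    ext C
    constructor
    · rintro ⟨⟨hC, hCfix⟩, hCsupp⟩
      have hne : Nat.card {t : Torus ℓ // t ∈ C ∧ q • t = 0 ∧
          ∃ x : Fin ℓ → ℝ, t = pT ℓ x ∧ pT ℓ (x ᵥ* realMat ρ γ) = t} ≠ 0 := hCsupp
      rw [hcard C hC] at hne
      have hnem : (C ∩ S).Nonempty := by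
        by_contra hcon
        rw [Set.not_nonempty_iff_eq_empty] at hcon
        rw [hcon] at hne
        simp at hne
      obtain ⟨t, htC, htS⟩ := hnem
      obtain ⟨t₀, ht₀, rfl⟩ := hC
      have : connectedComponentIn (TA α) t₀ = connectedComponentIn (TA α) t :=
        connectedComponentIn_eq htC
      rw [this]
      rw [Finset.mem_coe, hT_def, Finset.mem_image]
      exact ⟨t, hS_fin.mem_toFinset.mpr htS, rfl⟩
    · intro hC
      rw [Finset.mem_coe] at hC
      refine ⟨hTfc C hC, ?_⟩
      rw [hT_def, Finset.mem_image] at hC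
      obtain ⟨t, htSF, rfl⟩ := hC
      obtain ⟨hta, hq0, hfix⟩ := hmemS t htSF
      have hchamber : IsChamberT α (connectedComponentIn (TA α) t) := ⟨t, hta, rfl⟩
      show Nat.card {u : Torus ℓ // u ∈ connectedComponentIn (TA α) t ∧ q • u = 0 ∧
          ∃ x : Fin ℓ → ℝ, u = pT ℓ x ∧ pT ℓ (x ᵥ* realMat ρ γ) = u} ≠ 0
      rw [hcard _ hchamber]
      have hpos : (connectedComponentIn (TA α) t ∩ S).Nonempty :=
        ⟨t, mem_connectedComponentIn hta, hmemS t htSF⟩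
      exact ((Set.ncard_pos (hS_fin.subset Set.inter_subset_right)).mpr hpos).ne'
  have hTsub : (↑T : Set (Set (Torus ℓ))) ⊆
      Function.support (fun C => Nat.card {t : Torus ℓ // t ∈ C ∧ q • t = 0 ∧
        ∃ x : Fin ℓ → ℝ, t = pT ℓ x ∧ pT ℓ (x ᵥ* realMat ρ γ) = t}) := by
    rw [← hsupp]
    exact Set.inter_subset_right
  rw [finsum_mem_eq_sum_of_inter_support_eq _
    (hsupp.trans (Set.inter_eq_left.mpr hTsub).symm)]
  -- now a finite counting argument
  have hstep : ∀ C ∈ T, Nat.card {t : Torus ℓ // t ∈ C ∧ q • t = 0 ∧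
      ∃ x : Fin ℓ → ℝ, t = pT ℓ x ∧ pT ℓ (x ᵥ* realMat ρ γ) = t} =
      (SF.filter (· ∈ C)).card := by
    intro C hC
    rw [hcard C (hTfc C hC).1]
    rw [← Set.ncard_coe_finset]
    congr 1
    ext t
    simp only [Finset.coe_filter, Set.mem_setOf_eq, Set.mem_inter_iff]
    rw [hS_fin.mem_toFinset]
    tauto
  rw [Finset.sum_congr rfl hstep]
  have hfiber : SF.card = ∑ C ∈ T, (SF.filter (fun t => connectedComponentIn (TA α) t = C)).card := by
    apply Finset.card_eq_sum_card_fiberwise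
    intro t ht
    rw [hT_def, Finset.mem_coe, Finset.mem_image]
    exact ⟨t, ht, rfl⟩
  have hfilter : ∀ C ∈ T, SF.filter (fun t => connectedComponentIn (TA α) t = C) =
      SF.filter (· ∈ C) := by
    intro C hC
    apply Finset.filter_congr
    intro t htSF
    obtain ⟨hta, _, _⟩ := hmemS t htSF
    rw [hT_def, Finset.mem_image] at hC
    obtain ⟨u, huSF, rfl⟩ := hC
    constructor
    · intro h
      rw [← h]
      exact mem_connectedComponentIn hta
    · intro h
      exact (connectedComponentIn_eq h).symm
  have hScard : Nat.card S = SF.card := by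
    rw [Nat.card_coe_set_eq, Set.ncard_eq_toFinset_card S hS_fin]
  rw [hScard, hfiber]
  apply Finset.sum_congr rfl
  intro C hC
  rw [hfilter C hC]
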